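/- Let X be a Banach space with a projectional sequence {P_α : α < κ} such that each subspace P_α X is weakly Lindelöf determined. Then X is a Plichko space. -/

import Mathlib

set_option maxHeartbeats 1000000
open Cardinal Set Submodule

namespace Stmt12

universe u v

noncomputable def om1 : Ordinal.{u} := (ℵ₁ : Cardinal.{u}).ord

theorem Iio_countable {ι : Ordinal.{u}} (h : ι < om1.{u}) : (Set.Iio ι).Countable := by
  rw [Cardinal.countable_iff_lt_aleph_one, Ordinal.mk_Iio_ordinal]
  have h1 : ι.card < (ℵ₁ : Cardinal.{u}) := Cardinal.lt_ord.1 h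
  have h2 : Cardinal.lift.{u+1} ι.card < Cardinal.lift.{u+1} (ℵ₁ : Cardinal.{u}) :=
    (Cardinal.lift_lt).2 h1
  have h3 : Cardinal.lift.{u+1} (ℵ₁ : Cardinal.{u}) = (ℵ₁ : Cardinal.{u+1}) := by
    rw [Cardinal.lift_aleph]; norm_num
  rwa [h3] at h2

theorem iSup_nat_lt_om1 (g : ULift.{u} ℕ → Ordinal.{u}) (h : ∀ n, g n < om1.{u}) :
    (⨆ n, g n) < om1.{u} := by
  refine Cardinal.iSup_lt_ord_lift_of_isRegular (c := (ℵ₁ : Cardinal.{u}))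
    Cardinal.isRegular_aleph_one ?_ h
  have : #(ULift.{u} ℕ) ≤ ℵ₀ := Cardinal.mk_le_aleph0
  exact lt_of_le_of_lt (by simpa using Cardinal.lift_le.2 this) Cardinal.aleph0_lt_aleph_one

theorem zero_lt_om1 : (0 : Ordinal.{u}) < om1.{u} := by
  rw [om1, Cardinal.lt_ord]
  simpa using lt_of_le_of_lt (zero_le (ℵ₀ : Cardinal.{u})) Cardinal.aleph0_lt_aleph_one

theorem csSup_lt_om1 {T : Set Ordinal.{u}} (hT : T.Countable) (h : ∀ o ∈ T, o < om1.{u}) :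
    sSup T < om1.{u} := by
  classical
  rcases T.eq_empty_or_nonempty with rfl | hne
  · rw [csSup_empty]
    exact zero_lt_om1
  · obtain ⟨f, hf⟩ := Set.countable_iff_exists_subset_range.1 hT
    have hgb : ∀ n : ULift.{u} ℕ, (if f n.down ∈ T then f n.down else 0) < om1.{u} := by
      intro n
      by_cases hmem : f n.down ∈ T
      · rw [if_pos hmem]; exact h _ hmem
      · rw [if_neg hmem]; exact zero_lt_om1
    refine lt_of_le_of_lt (csSup_le hne fun o ho => ?_) (iSup_nat_lt_om1 _ hgb)
    obtain ⟨n, hn⟩ := hf ho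
    have heq : o = if f (ULift.up.{u} n).down ∈ T then f (ULift.up.{u} n).down else 0 := by
      simp only [ULift.down_up]
      rw [hn, if_pos ho]
    rw [heq]
    exact le_ciSup (Ordinal.bddAbove_range _) (ULift.up n)

theorem bddc {s : Set Ordinal.{u}} (hs : s.Countable) : BddAbove s := by
  have h1 : Countable ↥s := hs.to_subtype
  have h2 : Small.{u} ↥s := by
    obtain ⟨f, hf⟩ := Countable.exists_injective_nat ↥s
    exact small_of_injective hf
  exact Ordinal.bddAbove_of_small

theorem mkLim {o : Ordinal.{u}} (h0 : o ≠ 0) (h : ∀ a < o, Order.succ a < o) :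
    Order.IsSuccLimit o :=
  Ordinal.isSuccLimit_iff.2 ⟨h0, Order.isSuccPrelimit_of_succ_lt h⟩

theorem om1_isLimit : Order.IsSuccLimit om1.{u} :=
  Cardinal.isSuccLimit_ord (le_of_lt Cardinal.aleph0_lt_aleph_one)

noncomputable def chain (S : Set Ordinal.{u}) : Ordinal.{u} → Ordinal.{u} :=
  Ordinal.lt_wf.fix (fun ι IH => sInf (S \ {β | ∃ ι', ∃ h : ι' < ι, IH ι' h = β}))

theorem chain_eq (S : Set Ordinal.{u}) (ι : Ordinal.{u}) :
    chain S ι = sInf (S \ {β | ∃ ι', ∃ _h : ι' < ι, chain S ι' = β}) := by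
  rw [chain, WellFounded.fix_eq]

theorem chain_spec {S : Set Ordinal.{u}} (hS : ¬ S.Countable) {ι : Ordinal.{u}}
    (hι : ι < om1.{u}) : chain S ι ∈ S ∧ ∀ ι' < ι, chain S ι' < chain S ι := by
  have himg : {β | ∃ ι', ∃ _h : ι' < ι, chain S ι' = β} = (chain S) '' (Set.Iio ι) := by
    ext β; simp [Set.mem_image]
  have hcnt : ({β | ∃ ι', ∃ _h : ι' < ι, chain S ι' = β}).Countable := by
    rw [himg]; exact (Iio_countable hι).image _
  have hne : (S \ {β | ∃ ι', ∃ _h : ι' < ι, chain S ι' = β}).Nonempty := by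
    rw [Set.diff_nonempty]
    intro hsub
    exact hS (hcnt.mono hsub)
  have hmem : chain S ι ∈ S \ {β | ∃ ι', ∃ _h : ι' < ι, chain S ι' = β} := by
    rw [chain_eq]; exact csInf_mem hne
  refine ⟨hmem.1, fun ι' hι' => ?_⟩
  have hmem' : chain S ι ∈ S \ {β | ∃ ι'', ∃ _h : ι'' < ι', chain S ι'' = β} := by
    refine ⟨hmem.1, fun hb => hmem.2 ?_⟩
    obtain ⟨ι'', h1, h2⟩ := hb
    exact ⟨ι'', lt_trans h1 hι', h2⟩
  have hle : chain S ι' ≤ chain S ι := by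
    rw [chain_eq S ι']; exact csInf_le (OrderBot.bddBelow _) hmem'
  rcases lt_or_eq_of_le hle with h | h
  · exact h
  · exfalso; exact hmem.2 ⟨ι', hι', h⟩

noncomputable def clubEnum (Λ : Set Ordinal.{u}) : Ordinal.{u} → Ordinal.{u} :=
  Ordinal.lt_wf.fix (fun i IH => sInf {α | α ∈ Λ ∧ ∀ i', ∀ h : i' < i, IH i' h < α})

theorem clubEnum_eq (Λ : Set Ordinal.{u}) (i : Ordinal.{u}) :
    clubEnum Λ i = sInf {α | α ∈ Λ ∧ ∀ i', i' < i → clubEnum Λ i' < α} := by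
  rw [clubEnum, WellFounded.fix_eq]

theorem wld_case {X : Type*} [NormedAddCommGroup X] [NormedSpace ℝ X]
    (A : Set X) (hd : closure (Submodule.span ℝ A : Set X) = Set.univ)
    (hc : ∀ φ : X →L[ℝ] ℝ, {a ∈ A | φ a ≠ 0}.Countable) :
    ∃ D : Set (X →L[ℝ] ℝ),
      (∃ c > (0:ℝ), ∀ x : X,
        c * ‖x‖ ≤ sSup {t : ℝ | ∃ φ ∈ D, φ ≠ 0 ∧ t = |φ x| / ‖φ‖}) ∧
      ∃ A : Set X, closure (Submodule.span ℝ A : Set X) = Set.univ ∧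
        ∀ φ ∈ D, {a ∈ A | φ a ≠ 0}.Countable := by
  refine ⟨Set.univ, ⟨1, one_pos, ?_⟩, A, hd, fun φ _ => hc φ⟩
  intro x
  rw [one_mul]
  by_cases hx : x = 0
  · subst hx
    simp only [norm_zero]
    apply Real.sSup_nonneg
    rintro t ⟨φ, -, hφ, rfl⟩
    positivity
  · obtain ⟨g, hg1, hgx⟩ := exists_dual_vector ℝ x (norm_ne_zero_iff.mpr hx)
    have hgx' : g x = ‖x‖ := by simpa using hgx
    have hgne : g ≠ 0 := by
      intro h
      rw [h] at hgx'
      simp only [ContinuousLinearMap.zero_apply] at hgx'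
      exact hx (norm_eq_zero.mp hgx'.symm)
    have hmem : ‖x‖ ∈ {t : ℝ | ∃ φ ∈ (Set.univ : Set (X →L[ℝ] ℝ)), φ ≠ 0 ∧ t = |φ x| / ‖φ‖} := by
      refine ⟨g, trivial, hgne, ?_⟩
      rw [hgx', hg1, abs_of_nonneg (norm_nonneg x), div_one]
    refine le_csSup ⟨‖x‖, ?_⟩ hmem
    rintro t ⟨φ, -, hφ, rfl⟩
    have hφpos : (0:ℝ) < ‖φ‖ := norm_pos_iff.mpr hφ
    rw [div_le_iff₀ hφpos]
    calc |φ x| ≤ ‖φ‖ * ‖x‖ := by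
          simpa [Real.norm_eq_abs] using φ.le_opNorm x
      _ = ‖x‖ * ‖φ‖ := by ring


variable {X : Type v} [NormedAddCommGroup X] [NormedSpace ℝ X]

section Core

variable (lam : Ordinal.{u}) (T : Ordinal.{u} → X →L[ℝ] X) (M : ℝ)

theorem core
    (hlam : Order.IsSuccLimit lam)
    (hM1 : 1 ≤ M) (hM : ∀ i, i < lam → ‖T i‖ ≤ M)
    (hproj : ∀ i, i < lam → ∀ x, T i (T i x) = T i x)
    (hseq : ∀ i j, i < j → j < lam → (∀ x, T i (T j x) = T i x) ∧ (∀ x, T j (T i x) = T i x))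
    (hlim : ∀ j, j < lam → Order.IsSuccLimit j →
      Set.range (T j) = closure (⋃ i < j, Set.range (T i)))
    (hcov : closure (⋃ i < lam, Set.range (T i)) = (Set.univ : Set X))
    (𝒜 : Ordinal.{u} → Set X)
    (h𝒜₁ : ∀ i, i < lam → Set.range (T i) ⊆ closure (Submodule.span ℝ (𝒜 i) : Set X))
    (h𝒜₂ : ∀ i, i < lam → ∀ φ : X →L[ℝ] ℝ, {a ∈ 𝒜 i | φ a ≠ 0}.Countable) :
    ∃ D : Set (X →L[ℝ] ℝ),
      (∃ c > (0:ℝ), ∀ x : X,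
        c * ‖x‖ ≤ sSup {t : ℝ | ∃ φ ∈ D, φ ≠ 0 ∧ t = |φ x| / ‖φ‖}) ∧
      ∃ A : Set X, closure (Submodule.span ℝ A : Set X) = Set.univ ∧
        ∀ φ ∈ D, {a ∈ A | φ a ≠ 0}.Countable := by
  have hM0 : (0:ℝ) < M := lt_of_lt_of_le one_pos hM1
  -- membership in ranges
  have hmem : ∀ i, i < lam → ∀ x, (x ∈ Set.range (T i) ↔ T i x = x) := by
    intro i hi x
    constructor
    · rintro ⟨y, rfl⟩; exact hproj i hi y
    · intro h; exact ⟨x, h⟩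
  -- monotone ranges
  have hmono : ∀ i j, i ≤ j → j < lam → Set.range (T i) ⊆ Set.range (T j) := by
    intro i j hij hj x hx
    rcases eq_or_lt_of_le hij with rfl | hij'
    · exact hx
    · rw [hmem j hj]
      rw [hmem i (lt_trans hij' hj)] at hx
      rw [← hx]
      exact (hseq i j hij' hj).2 x
  -- increment operators
  set Q : Ordinal.{u} → X →L[ℝ] X := fun j => T (j+1) - T j with hQ
  have hQapp : ∀ j x, Q j x = T (j+1) x - T j x := by
    intro j x; rw [hQ]; rfl
  have hsucc_lt : ∀ j, j < lam → j + 1 < lam := by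
    intro j hj
    rw [Ordinal.add_one_eq_succ]
    exact hlam.succ_lt hj
  -- T i ∘ Q j = 0 for i ≤ j < lam
  have hTQ0 : ∀ i j, i ≤ j → j < lam → ∀ x, T i (Q j x) = 0 := by
    intro i j hij hj x
    have hj1 : j + 1 < lam := hsucc_lt j hj
    have h1 : T i (T (j+1) x) = T i x := by
      have : i < j + 1 := lt_of_le_of_lt hij (by rw [Ordinal.add_one_eq_succ]; exact Order.lt_succ j)
      exact (hseq i (j+1) this hj1).1 x
    have h2 : T i (T j x) = T i x := by
      rcases eq_or_lt_of_le hij with rfl | h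
      · exact hproj i hj x
      · exact (hseq i j h hj).1 x
    rw [hQapp, map_sub, h1, h2, sub_self]
  -- T i ∘ Q j = Q j for j + 1 ≤ i < lam
  have hTQid : ∀ i j, j + 1 ≤ i → i < lam → ∀ x, T i (Q j x) = Q j x := by
    intro i j hij hi x
    have h1 : T i (T (j+1) x) = T (j+1) x := by
      rcases eq_or_lt_of_le hij with h | h
      · rw [← h]; exact hproj (j+1) (h ▸ hi) x
      · exact (hseq (j+1) i h hi).2 x
    have h2 : T i (T j x) = T j x := by
      have : j < i := lt_of_lt_of_le (by rw [Ordinal.add_one_eq_succ]; exact Order.lt_succ j) hij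
      exact (hseq j i this hi).2 x
    rw [hQapp, map_sub, h1, h2, ← hQapp]
  -- limit continuity
  have hcont : ∀ j, j < lam → Order.IsSuccLimit j → ∀ x : X, ∀ ε : ℝ, 0 < ε →
      ∃ i₀, i₀ < j ∧ ∀ i, i₀ ≤ i → i < j → ‖T i x - T j x‖ ≤ (M+1)*ε := by
    intro j hj hjlim x ε hε
    have h1 : T j x ∈ closure (⋃ i < j, Set.range (T i)) := by
      rw [← hlim j hj hjlim]; exact ⟨x, rfl⟩
    rw [Metric.mem_closure_iff] at h1
    obtain ⟨z, hz, hdz⟩ := h1 ε hε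
    simp only [Set.mem_iUnion] at hz
    obtain ⟨i₀, hi₀j, hzmem⟩ := hz
    refine ⟨i₀, hi₀j, fun i hi₀i hij => ?_⟩
    have hilam : i < lam := lt_trans hij hj
    have hTiz : T i z = z := by
      rw [← hmem i hilam]
      exact hmono i₀ i hi₀i hilam hzmem
    have hTix : T i x = T i (T j x) := ((hseq i j hij hj).1 x).symm
    rw [dist_eq_norm] at hdz
    have step : ‖T i x - T j x‖ ≤ ‖T i (T j x) - T i z‖ + ‖z - T j x‖ := by
      rw [hTix]
      have : T i (T j x) - T j x = (T i (T j x) - T i z) + (z - T j x) := by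
        rw [hTiz]; abel
      rw [this]
      exact norm_add_le _ _
    refine le_trans step ?_
    have hd : ‖z - T j x‖ ≤ ε := by
      rw [norm_sub_rev]; exact le_of_lt hdz
    have h2 : ‖T i (T j x) - T i z‖ ≤ M * ε := by
      rw [← map_sub]
      calc ‖T i (T j x - z)‖ ≤ ‖T i‖ * ‖T j x - z‖ := (T i).le_opNorm _
        _ ≤ M * ε := mul_le_mul (hM i hilam) (le_of_lt hdz) (norm_nonneg _) (le_of_lt hM0)
    nlinarith [hε]
  -- countable sets of ordinals are bounded above
  have hbddc : ∀ s : Set Ordinal.{u}, s.Countable → BddAbove s := by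
    intro s hs
    have h1 : Countable ↥s := hs.to_subtype
    have h2 : Small.{u} ↥s := by
      obtain ⟨f, hf⟩ := Countable.exists_injective_nat ↥s
      exact small_of_injective hf
    exact Ordinal.bddAbove_of_small
  -- the sigma-star countability theorem
  have hsig : ∀ ψ : X →L[ℝ] ℝ, ∀ i, i < lam →
      {j | j < i ∧ ∃ a ∈ 𝒜 (j+1), ψ (Q j a) ≠ 0}.Countable := by
    intro ψ i hi
    by_contra hunc
    set σs : Set Ordinal.{u} := {j | j < i ∧ ∃ a ∈ 𝒜 (j+1), ψ (Q j a) ≠ 0} with hσs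
    set jc : Ordinal.{u} → Ordinal.{u} := chain σs with hjcdef
    have hjc : ∀ ι, ι < om1.{u} → jc ι ∈ σs ∧ ∀ ι' < ι, jc ι' < jc ι :=
      fun ι hι => chain_spec hunc hι
    have hjcmono : ∀ ι' ι, ι' ≤ ι → ι < om1.{u} → jc ι' ≤ jc ι := by
      intro ι' ι h hι
      rcases eq_or_lt_of_le h with rfl | h'
      · exact le_rfl
      · exact le_of_lt ((hjc ι hι).2 ι' h')
    set E : Set Ordinal.{u} := (fun ι => jc ι + 1) '' Set.Iio om1.{u} with hE
    have hEne : E.Nonempty := ⟨jc 0 + 1, 0, zero_lt_om1, rfl⟩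
    have hEbd : BddAbove E := by
      refine ⟨i, ?_⟩
      rintro e ⟨ι, hι, rfl⟩
      show jc ι + 1 ≤ i
      rw [Ordinal.add_one_eq_succ, Order.succ_le_iff]
      exact (hjc ι hι).1.1
    set δ : Ordinal.{u} := sSup E with hδdef
    have hδi : δ ≤ i := by
      refine csSup_le hEne ?_
      rintro e ⟨ι, hι, rfl⟩
      show jc ι + 1 ≤ i
      rw [Ordinal.add_one_eq_succ, Order.succ_le_iff]
      exact (hjc ι hι).1.1
    have hδlam : δ < lam := lt_of_le_of_lt hδi hi
    have hup : ∀ ι, ι < om1.{u} → jc ι + 1 ≤ δ := fun ι hι => le_csSup hEbd ⟨ι, hι, rfl⟩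
    have hjcδ : ∀ ι, ι < om1.{u} → jc ι < δ := by
      intro ι hι
      refine lt_of_lt_of_le ?_ (hup ι hι)
      rw [Ordinal.add_one_eq_succ]
      exact Order.lt_succ _
    have hδlim : Order.IsSuccLimit δ := by
      refine mkLim ?_ ?_
      · have h0 : (0:Ordinal.{u}) ≤ jc 0 := zero_le
        have := lt_of_le_of_lt h0 (hjcδ 0 zero_lt_om1)
        exact ne_of_gt this
      · intro a ha
        obtain ⟨e, ⟨ι, hι, rfl⟩, hae⟩ := exists_lt_of_lt_csSup hEne ha
        change a < jc ι + 1 at hae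
        have ha' : a ≤ jc ι := by
          rwa [Ordinal.add_one_eq_succ, Order.lt_succ_iff] at hae
        have hι1 : ι + 1 < om1.{u} := by
          rw [Ordinal.add_one_eq_succ]
          exact om1_isLimit.succ_lt hι
        have hlt : jc ι < jc (ι+1) := (hjc (ι+1) hι1).2 ι (by
          rw [Ordinal.add_one_eq_succ]; exact Order.lt_succ _)
        calc Order.succ a ≤ Order.succ (jc ι) := Order.succ_le_succ ha'
          _ < Order.succ (jc (ι+1)) := Order.succ_lt_succ hlt
          _ = jc (ι+1) + 1 := (Ordinal.add_one_eq_succ _).symm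
          _ ≤ δ := hup (ι+1) hι1
    -- thresholds
    have hth : ∀ a : X, ∀ m : ℕ, ∃ τ, τ < om1.{u} ∧ ∀ ι, τ ≤ ι → ι < om1.{u} →
        |ψ (T (jc ι) a) - ψ (T δ a)| < 1/(m+1) := by
      intro a m
      have hm1 : (0:ℝ) < 1/(m+1) := by positivity
      set ε : ℝ := (1/(m+1)) / ((M+1)*(‖ψ‖+1)) with hεdef
      have hεpos : 0 < ε := by positivity
      obtain ⟨i₀, hi₀δ, hbound⟩ := hcont δ hδlam hδlim a ε hεpos
      obtain ⟨e, ⟨ι₀, hι₀, rfl⟩, hi₀e⟩ := exists_lt_of_lt_csSup hEne (lt_of_lt_of_le hi₀δ le_rfl)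
      change i₀ < jc ι₀ + 1 at hi₀e
      have hi₀jc : i₀ ≤ jc ι₀ := by
        rwa [Ordinal.add_one_eq_succ, Order.lt_succ_iff] at hi₀e
      refine ⟨ι₀, hι₀, fun ι hτι hι => ?_⟩
      have h1 : i₀ ≤ jc ι := le_trans hi₀jc (hjcmono ι₀ ι hτι hι)
      have h2 : jc ι < δ := hjcδ ι hι
      have h3 : ‖T (jc ι) a - T δ a‖ ≤ (M+1)*ε := hbound (jc ι) h1 h2
      have h4 : |ψ (T (jc ι) a) - ψ (T δ a)| ≤ ‖ψ‖ * ((M+1)*ε) := by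
        rw [← map_sub]
        calc |ψ (T (jc ι) a - T δ a)| ≤ ‖ψ‖ * ‖T (jc ι) a - T δ a‖ := by
              simpa [Real.norm_eq_abs] using ψ.le_opNorm (T (jc ι) a - T δ a)
          _ ≤ ‖ψ‖ * ((M+1)*ε) := by
              apply mul_le_mul_of_nonneg_left h3 (norm_nonneg ψ)
      refine lt_of_le_of_lt h4 ?_
      rw [hεdef]
      calc ‖ψ‖ * ((M+1) * ((1/(m+1)) / ((M+1)*(‖ψ‖+1))))
          = ‖ψ‖/(‖ψ‖+1) * (1/(m+1)) := by
            field_simp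
        _ < 1 * (1/(m+1)) := by
            apply mul_lt_mul_of_pos_right _ hm1
            rw [div_lt_one (by positivity)]
            linarith [norm_nonneg ψ]
        _ = 1/(m+1) := one_mul _
    choose τfun hτ1 hτ2 using hth
    -- support sets on the piece at δ
    set sInfty : Set X := {a | a ∈ 𝒜 δ ∧ ψ (T δ a) ≠ 0} with hsInfty
    set sfun : Ordinal.{u} → Set X := fun ι => {a | a ∈ 𝒜 δ ∧ ψ (T (jc ι) a) ≠ 0} with hsfun
    have hsInftyc : sInfty.Countable := h𝒜₂ δ hδlam (ψ.comp (T δ))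
    have hsfunc : ∀ ι, (sfun ι).Countable := fun ι => h𝒜₂ δ hδlam (ψ.comp (T (jc ι)))
    -- the closing-off function
    set Θ : Ordinal.{u} → Ordinal.{u} := fun β =>
      max (β+1) (sSup {o | ∃ a ∈ sInfty ∪ ⋃ ι ∈ Set.Iio β, sfun ι, ∃ m : ℕ, o = τfun a m} + 1)
      with hΘ
    have hΘgt : ∀ β, β < Θ β := fun β => lt_of_lt_of_le
      (by rw [Ordinal.add_one_eq_succ]; exact Order.lt_succ _) (le_max_left _ _)
    have hΘlt : ∀ β, β < om1.{u} → Θ β < om1.{u} := by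
      intro β hβ
      rw [hΘ]
      dsimp only
      rw [max_lt_iff]
      constructor
      · rw [Ordinal.add_one_eq_succ]
        exact om1_isLimit.succ_lt hβ
      · rw [Ordinal.add_one_eq_succ]
        apply om1_isLimit.succ_lt
        apply csSup_lt_om1
        · have hEcnt : (sInfty ∪ ⋃ ι ∈ Set.Iio β, sfun ι).Countable := by
            refine Set.Countable.union hsInftyc ?_
            exact Set.Countable.biUnion (Iio_countable hβ) (fun ι _ => hsfunc ι)
          have : {o | ∃ a ∈ sInfty ∪ ⋃ ι ∈ Set.Iio β, sfun ι, ∃ m : ℕ, o = τfun a m}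
              ⊆ ⋃ a ∈ (sInfty ∪ ⋃ ι ∈ Set.Iio β, sfun ι), Set.range (τfun a) := by
            rintro o ⟨a, ha, m, rfl⟩
            exact Set.mem_biUnion ha ⟨m, rfl⟩
          exact (hEcnt.biUnion (fun a _ => Set.countable_range _)).mono this
        · rintro o ⟨a, ha, m, rfl⟩
          exact hτ1 a m
    have hτsetc : ∀ β, β < om1.{u} →
        {o | ∃ a ∈ sInfty ∪ ⋃ ι ∈ Set.Iio β, sfun ι, ∃ m : ℕ, o = τfun a m}.Countable := by
      intro β hβ
      have hEcnt : (sInfty ∪ ⋃ ι ∈ Set.Iio β, sfun ι).Countable := by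
        refine Set.Countable.union hsInftyc ?_
        exact Set.Countable.biUnion (Iio_countable hβ) (fun ι _ => hsfunc ι)
      have hsub : {o | ∃ a ∈ sInfty ∪ ⋃ ι ∈ Set.Iio β, sfun ι, ∃ m : ℕ, o = τfun a m}
          ⊆ ⋃ a ∈ (sInfty ∪ ⋃ ι ∈ Set.Iio β, sfun ι), Set.range (τfun a) := by
        rintro o ⟨a, ha, m, rfl⟩
        exact Set.mem_biUnion ha ⟨m, rfl⟩
      exact (hEcnt.biUnion (fun a _ => Set.countable_range _)).mono hsub
    have hΘth : ∀ β, β < om1.{u} → ∀ a, (a ∈ sInfty ∪ ⋃ ι ∈ Set.Iio β, sfun ι) → ∀ m : ℕ,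
        τfun a m < Θ β := by
      intro β hβ a ha m
      refine lt_of_lt_of_le ?_ (le_max_right _ _)
      have hmem' : τfun a m ∈ {o | ∃ a ∈ sInfty ∪ ⋃ ι ∈ Set.Iio β, sfun ι, ∃ m : ℕ, o = τfun a m} :=
        ⟨a, ha, m, rfl⟩
      have hbd : BddAbove {o | ∃ a ∈ sInfty ∪ ⋃ ι ∈ Set.Iio β, sfun ι, ∃ m : ℕ, o = τfun a m} :=
        hbddc _ (hτsetc β hβ)
      refine lt_of_le_of_lt (le_csSup hbd hmem') ?_
      rw [Ordinal.add_one_eq_succ]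
      exact Order.lt_succ _
    -- iteration
    have hΘiter : ∀ n : ℕ, Θ^[n] 0 < om1.{u} := by
      intro n
      induction n with
      | zero => simpa using zero_lt_om1
      | succ n ih => rw [Function.iterate_succ_apply']; exact hΘlt _ ih
    set itr : ℕ → Ordinal.{u} := fun n => Θ^[n+1] 0 with hitr
    have hitrlt : ∀ n, itr n < om1.{u} := fun n => hΘiter (n+1)
    have hitrsucc : ∀ n, itr (n+1) = Θ (itr n) := by
      intro n
      rw [hitr]
      exact Function.iterate_succ_apply' Θ (n+1) 0
    have hitrmono : StrictMono itr := by
      apply strictMono_nat_of_lt_succ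
      intro n
      rw [hitrsucc]
      exact hΘgt _
    -- zero test lemma
    have habs0 : ∀ d : ℝ, (∀ m : ℕ, |d| < 1/(m+1)) → d = 0 := by
      intro d h
      by_contra hd
      obtain ⟨m, hm⟩ := exists_nat_one_div_lt (abs_pos.2 hd)
      exact absurd (h m) (not_lt.2 (le_of_lt hm))
    -- the key eventual equality
    have hkey : ∀ a, a ∈ 𝒜 δ → ∃ N : ℕ, ∀ n, N ≤ n →
        ψ (T (jc (itr n)) a) = ψ (T δ a) := by
      intro a ha
      by_cases hδ0 : ψ (T δ a) ≠ 0
      · refine ⟨1, fun n hn => ?_⟩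
        have hmem' : a ∈ sInfty ∪ ⋃ ι ∈ Set.Iio (Θ^[n] 0), sfun ι := Or.inl ⟨ha, hδ0⟩
        have hthm : ∀ m : ℕ, |ψ (T (jc (itr n)) a) - ψ (T δ a)| < 1/(m+1) := by
          intro m
          have h1 : τfun a m < itr n := by
            have : itr n = Θ (Θ^[n] 0) := by rw [hitr]; exact Function.iterate_succ_apply' Θ n 0
            rw [this]
            exact hΘth _ (hΘiter n) a hmem' m
          exact hτ2 a m (itr n) (le_of_lt h1) (hitrlt n)
        have := habs0 _ hthm
        linarith [this, abs_nonneg (ψ (T (jc (itr n)) a) - ψ (T δ a))] 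
      · push_neg at hδ0
        by_cases hall : ∀ k : ℕ, ψ (T (jc (itr k)) a) = 0
        · exact ⟨0, fun n _ => by rw [hall n, hδ0]⟩
        · push_neg at hall
          obtain ⟨k, hk⟩ := hall
          refine ⟨k+2, fun n hn => ?_⟩
          obtain ⟨n', rfl⟩ : ∃ n', n = n'+1 := ⟨n-1, by omega⟩
          have hkn' : k < n' := by omega
          have hmem' : a ∈ sInfty ∪ ⋃ ι ∈ Set.Iio (Θ^[n'+1] 0), sfun ι := by
            refine Or.inr ?_
            refine Set.mem_biUnion (?_ : itr k ∈ Set.Iio (Θ^[n'+1] 0)) ⟨ha, hk⟩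
            exact hitrmono hkn'
          have hthm : ∀ m : ℕ, |ψ (T (jc (itr (n'+1))) a) - ψ (T δ a)| < 1/(m+1) := by
            intro m
            have h1 : τfun a m < itr (n'+1) := by
              rw [hitrsucc]
              exact hΘth _ (hΘiter (n'+1)) a hmem' m
            exact hτ2 a m (itr (n'+1)) (le_of_lt h1) (hitrlt (n'+1))
          have := habs0 _ hthm
          linarith [this]
    -- the top index
    set ιhat : Ordinal.{u} := sSup (Set.range itr) with hιhat
    have hιhatlt : ιhat < om1.{u} := by
      apply csSup_lt_om1 (Set.countable_range itr)
      rintro o ⟨n, rfl⟩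
      exact hitrlt n
    set ιQ : Ordinal.{u} := ιhat + 1 with hιQ
    have hιQlt : ιQ < om1.{u} := by
      rw [hιQ, Ordinal.add_one_eq_succ]
      exact om1_isLimit.succ_lt hιhatlt
    have hιnQ : ∀ n, itr n < ιQ := by
      intro n
      have h1 : itr n ≤ ιhat :=
        le_csSup (hbddc _ (Set.countable_range itr)) ⟨n, rfl⟩
      refine lt_of_le_of_lt h1 ?_
      rw [hιQ, Ordinal.add_one_eq_succ]
      exact Order.lt_succ _
    obtain ⟨hj''i, a'', ha''𝒜, ha''ne⟩ := (hjc ιQ hιQlt).1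
    set j'' : Ordinal.{u} := jc ιQ with hj''def
    have hj''gt : ∀ n, jc (itr n) < j'' := fun n => (hjc ιQ hιQlt).2 _ (hιnQ n)
    have hj''δ : j'' < δ := hjcδ ιQ hιQlt
    have hj''1δ : j'' + 1 < δ := by
      rw [Ordinal.add_one_eq_succ]
      exact hδlim.succ_lt hj''δ
    have hj''lam : j'' < lam := lt_trans hj''δ hδlam
    set w : X := Q j'' a'' with hw
    have hw0 : ∀ n, ψ (T (jc (itr n)) w) = 0 := by
      intro n
      rw [hw, hTQ0 (jc (itr n)) j'' (le_of_lt (hj''gt n)) hj''lam a'']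
      exact map_zero ψ
    have hwδ : T δ w = w := hTQid δ j'' (le_of_lt hj''1δ) hδlam a''
    have hψw : ψ w ≠ 0 := ha''ne
    have hwcl : w ∈ closure (Submodule.span ℝ (𝒜 δ) : Set X) := h𝒜₁ δ hδlam ⟨w, hwδ⟩
    set L : ℝ := |ψ w| with hLdef
    have hL : 0 < L := abs_pos.2 hψw
    set ε₀ : ℝ := L / (4*(‖ψ‖+1)*(M+1)) with hε₀
    have hε₀pos : 0 < ε₀ := by positivity
    obtain ⟨u, humem, hudist⟩ := Metric.mem_closure_iff.1 hwcl ε₀ hε₀pos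
    rw [dist_eq_norm] at hudist
    obtain ⟨nu, cu, gu, hgu⟩ := mem_span_set'.1 humem
    have hkeyu : ∃ N : ℕ, ∀ n, N ≤ n → ψ (T (jc (itr n)) u) = ψ (T δ u) := by
      choose Nf hNf using fun r : Fin nu => hkey (gu r : X) (gu r).2
      refine ⟨Finset.univ.sup Nf, fun n hn => ?_⟩
      rw [← hgu]
      simp only [map_sum, map_smul]
      refine Finset.sum_congr rfl (fun r _ => ?_)
      have : Nf r ≤ n := le_trans (Finset.le_sup (Finset.mem_univ r)) hn
      rw [hNf r n this]
    obtain ⟨N, hNu⟩ := hkeyu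
    -- final contradiction
    have hsplit : ψ (T δ w) = (ψ (T δ u) - ψ (T (jc (itr N)) u))
        + (ψ (T δ (w - u)) - ψ (T (jc (itr N)) (w - u))) + ψ (T (jc (itr N)) w) := by
      simp only [map_sub]
      ring
    have hterm : ∀ β, β < lam → |ψ (T β (w - u))| ≤ ‖ψ‖ * (M * ε₀) := by
      intro β hβ
      calc |ψ (T β (w-u))| ≤ ‖ψ‖ * ‖T β (w-u)‖ := by
            simpa [Real.norm_eq_abs] using ψ.le_opNorm (T β (w-u))
        _ ≤ ‖ψ‖ * (M * ε₀) := by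
            apply mul_le_mul_of_nonneg_left _ (norm_nonneg ψ)
            calc ‖T β (w-u)‖ ≤ ‖T β‖ * ‖w-u‖ := (T β).le_opNorm _
              _ ≤ M * ε₀ := mul_le_mul (hM β hβ) (le_of_lt hudist) (norm_nonneg _)
                  (le_of_lt hM0)
    have hlamjc : jc (itr N) < lam := lt_trans (lt_trans (hj''gt N) hj''δ) hδlam
    have hfin : L ≤ ‖ψ‖ * (M * ε₀) + ‖ψ‖ * (M * ε₀) := by
      have h1 : |ψ (T δ w)| = L := by rw [hwδ]
      have h2 := hterm δ hδlam
      have h3 := hterm (jc (itr N)) hlamjc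
      rw [hsplit, hNu N le_rfl, sub_self, hw0 N] at h1
      rw [← h1]
      calc |(0:ℝ) + (ψ (T δ (w - u)) - ψ (T (jc (itr N)) (w - u))) + 0|
          ≤ |ψ (T δ (w - u))| + |ψ (T (jc (itr N)) (w - u))| := by
            rw [zero_add, add_zero]
            exact abs_sub _ _
      _ ≤ ‖ψ‖ * (M * ε₀) + ‖ψ‖ * (M * ε₀) := add_le_add h2 h3
    have hnorm : (0:ℝ) ≤ ‖ψ‖ := norm_nonneg ψ
    have hKpos : (0:ℝ) < 4*(‖ψ‖+1)*(M+1) := by positivity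
    rw [hε₀] at hfin
    have heq : ‖ψ‖ * (M * (L / (4*(‖ψ‖+1)*(M+1)))) + ‖ψ‖ * (M * (L / (4*(‖ψ‖+1)*(M+1))))
        = (2*‖ψ‖*M/(4*(‖ψ‖+1)*(M+1))) * L := by ring
    rw [heq] at hfin
    have hlt : 2*‖ψ‖*M/(4*(‖ψ‖+1)*(M+1)) < 1 := by
      rw [div_lt_one hKpos]
      nlinarith
    have := mul_lt_mul_of_pos_right hlt hL
    rw [one_mul] at this
    linarith
  -- the linearly dense set A
  set A : Set X := 𝒜 0 ∪ ⋃ j ∈ Set.Iio lam, (⇑(Q j) '' 𝒜 (j+1)) with hA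
  have hMcl : (Submodule.topologicalClosure (Submodule.span ℝ A) : Set X)
      = closure (Submodule.span ℝ A : Set X) := Submodule.topologicalClosure_coe _
  have hdense : ∀ i, i < lam → Set.range (T i) ⊆ closure (Submodule.span ℝ A : Set X) := by
    intro i
    induction i using Ordinal.induction with
    | _ i IH =>
    intro hi
    rcases Ordinal.zero_or_succ_or_isSuccLimit i with rfl | ⟨j, rfl⟩ | hlimi
    · refine subset_trans (h𝒜₁ 0 hi) (closure_mono ?_)
      exact SetLike.coe_subset_coe.2 (Submodule.span_mono Set.subset_union_left)
    · -- successor case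
      have hj1 : j + 1 = Order.succ j := Ordinal.add_one_eq_succ j
      have hjlt : j < Order.succ j := Order.lt_succ j
      have hjlam : j < lam := lt_trans hjlt hi
      rintro x ⟨y, rfl⟩
      set x' := T (Order.succ j) y with hx'
      have hxfix : T (j+1) x' = x' := by
        rw [hj1, hx']
        exact hproj _ hi y
      have h1 : T j x' ∈ closure (Submodule.span ℝ A : Set X) :=
        IH j hjlt hjlam ⟨x', rfl⟩
      have h2 : Q j x' ∈ closure (Submodule.span ℝ A : Set X) := by
        have hx'mem : x' ∈ closure (Submodule.span ℝ (𝒜 (j+1)) : Set X) := by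
          apply h𝒜₁ (j+1) (by rw [hj1]; exact hi)
          exact ⟨x', hxfix⟩
        have himg : Q j x' ∈ ⇑(Q j) '' closure (Submodule.span ℝ (𝒜 (j+1)) : Set X) :=
          ⟨x', hx'mem, rfl⟩
        have hstep1 : ⇑(Q j) '' closure (Submodule.span ℝ (𝒜 (j+1)) : Set X)
            ⊆ closure (⇑(Q j) '' (Submodule.span ℝ (𝒜 (j+1)) : Set X)) :=
          image_closure_subset_closure_image (Q j).continuous
        have hstep2 : ⇑(Q j) '' (Submodule.span ℝ (𝒜 (j+1)) : Set X)
            = (Submodule.span ℝ (⇑(Q j) '' 𝒜 (j+1)) : Set X) := by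
          exact (congrArg (fun s : Submodule ℝ X => (s : Set X))
            (Submodule.span_image (Q j : X →ₗ[ℝ] X))).symm
        have hstep3 : (Submodule.span ℝ (⇑(Q j) '' 𝒜 (j+1)) : Set X)
            ⊆ (Submodule.span ℝ A : Set X) := by
          apply SetLike.coe_subset_coe.2
          apply Submodule.span_mono
          refine subset_trans ?_ Set.subset_union_right
          exact Set.subset_biUnion_of_mem (show j ∈ Set.Iio lam from hjlam)
            (u := fun j' => ⇑(Q j') '' 𝒜 (j'+1))
        refine (subset_trans hstep1 (closure_mono (subset_trans (le_of_eq hstep2) hstep3))) himg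
      have hdecomp : x' = T j x' + Q j x' := by
        rw [hQapp, hxfix]
        abel
      rw [← hMcl] at h1 h2 ⊢
      rw [SetLike.mem_coe] at h1 h2 ⊢
      rw [hdecomp]
      exact Submodule.add_mem _ h1 h2
    · rw [hlim i hi hlimi]
      refine closure_minimal ?_ isClosed_closure
      refine Set.iUnion₂_subset ?_
      intro j hj
      exact IH j hj (lt_trans hj hi)
  have hAdense : closure (Submodule.span ℝ A : Set X) = Set.univ := by
    apply Set.eq_univ_of_univ_subset
    rw [← hcov]
    refine closure_minimal ?_ isClosed_closure
    refine Set.iUnion₂_subset ?_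
    intro i hi
    exact hdense i hi
  -- countable supports for functionals factoring through the T i
  have hsupp : ∀ ψ : X →L[ℝ] ℝ, ∀ i, i < lam →
      {a ∈ A | (ψ.comp (T i)) a ≠ 0}.Countable := by
    intro ψ i hi
    have hbase : {a ∈ 𝒜 0 | (ψ.comp (T i)) a ≠ 0}.Countable :=
      h𝒜₂ 0 hlam.pos (ψ.comp (T i))
    have hσcnt : {j | j < i ∧ ∃ a ∈ 𝒜 (j+1), ψ (Q j a) ≠ 0}.Countable := hsig ψ i hi
    have hmain : {a ∈ A | (ψ.comp (T i)) a ≠ 0} ⊆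
        {a ∈ 𝒜 0 | (ψ.comp (T i)) a ≠ 0} ∪
        ⋃ j ∈ {j | j < i ∧ ∃ a ∈ 𝒜 (j+1), ψ (Q j a) ≠ 0},
          ⇑(Q j) '' {b ∈ 𝒜 (j+1) | ((ψ.comp (T i)).comp (Q j)) b ≠ 0} := by
      rintro a ⟨haA, hane⟩
      rcases haA with h0 | hU
      · exact Or.inl ⟨h0, hane⟩
      · right
        simp only [Set.mem_iUnion] at hU
        obtain ⟨j, hjlam, b, hb, rfl⟩ := hU
        have hji : j < i := by
          by_contra hge
          push_neg at hge
          apply hane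
          show ψ (T i (Q j b)) = 0
          rw [hTQ0 i j hge hjlam b]
          exact map_zero ψ
        have hj1i : j + 1 ≤ i := by
          rw [Ordinal.add_one_eq_succ, Order.succ_le_iff]
          exact hji
        have hψb : ψ (Q j b) ≠ 0 := by
          intro h0'
          apply hane
          show ψ (T i (Q j b)) = 0
          rw [hTQid i j hj1i hi b]
          exact h0'
        refine Set.mem_biUnion (⟨hji, b, hb, hψb⟩ :
          j ∈ {j | j < i ∧ ∃ a ∈ 𝒜 (j+1), ψ (Q j a) ≠ 0}) ?_
        exact ⟨b, ⟨hb, hane⟩, rfl⟩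
    refine Set.Countable.mono hmain ?_
    refine Set.Countable.union hbase ?_
    refine Set.Countable.biUnion hσcnt ?_
    intro j hj
    have hjlam : j + 1 < lam := by
      rw [Ordinal.add_one_eq_succ]
      exact hlam.succ_lt (lt_trans hj.1 hi)
    exact Set.Countable.image (h𝒜₂ (j+1) hjlam ((ψ.comp (T i)).comp (Q j))) _
  -- conclusion
  classical
  refine ⟨{φ : X →L[ℝ] ℝ | {a ∈ A | φ a ≠ 0}.Countable}, ⟨1/M, by positivity, ?_⟩,
    A, hAdense, fun φ hφ => hφ⟩
  intro x
  set S : Set ℝ := {t : ℝ | ∃ φ ∈ {φ : X →L[ℝ] ℝ | {a ∈ A | φ a ≠ 0}.Countable},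
    φ ≠ 0 ∧ t = |φ x| / ‖φ‖} with hS
  have hSbd : BddAbove S := by
    refine ⟨‖x‖, ?_⟩
    rintro t ⟨φ, -, hφ, rfl⟩
    have hφpos : (0:ℝ) < ‖φ‖ := norm_pos_iff.mpr hφ
    rw [div_le_iff₀ hφpos]
    calc |φ x| ≤ ‖φ‖ * ‖x‖ := by
          simpa [Real.norm_eq_abs] using φ.le_opNorm x
      _ = ‖x‖ * ‖φ‖ := by ring
  have hS0 : 0 ≤ sSup S := by
    apply Real.sSup_nonneg
    rintro t ⟨φ, -, hφ, rfl⟩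
    positivity
  have hkey : ∀ y : X, ∀ i, i < lam → T i y = y → y ≠ 0 →
      (‖y‖ - M*‖x - y‖)/M ≤ sSup S := by
    intro y i hi hTy hy
    obtain ⟨ψ, hψ1, hψy⟩ := exists_dual_vector ℝ y (norm_ne_zero_iff.mpr hy)
    have hψy' : ψ y = ‖y‖ := by simpa using hψy
    set φ := ψ.comp (T i) with hφdef
    have hφD : {a ∈ A | φ a ≠ 0}.Countable := hsupp ψ i hi
    have hφy : φ y = ‖y‖ := by
      rw [hφdef]
      show ψ (T i y) = ‖y‖
      rw [hTy, hψy']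
    have hφne : φ ≠ 0 := by
      intro h
      rw [h] at hφy
      simp only [ContinuousLinearMap.zero_apply] at hφy
      exact hy (norm_eq_zero.mp hφy.symm)
    have hφpos : (0:ℝ) < ‖φ‖ := norm_pos_iff.mpr hφne
    have hφM : ‖φ‖ ≤ M := by
      calc ‖φ‖ ≤ ‖ψ‖ * ‖T i‖ := ContinuousLinearMap.opNorm_comp_le _ _
        _ = ‖T i‖ := by rw [hψ1, one_mul]
        _ ≤ M := hM i hi
    have hmemS : |φ x| / ‖φ‖ ∈ S := ⟨φ, hφD, hφne, rfl⟩
    have hlow : ‖y‖ - M*‖x - y‖ ≤ |φ x| := by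
      have h1 : |φ y| - |φ x| ≤ |φ (y - x)| := by
        rw [map_sub]
        exact abs_sub_abs_le_abs_sub _ _
      have h2 : |φ (y - x)| ≤ M * ‖x - y‖ := by
        calc |φ (y-x)| ≤ ‖φ‖ * ‖y - x‖ := by
              simpa [Real.norm_eq_abs] using φ.le_opNorm (y-x)
          _ ≤ M * ‖x - y‖ := by
              rw [norm_sub_rev]
              exact mul_le_mul_of_nonneg_right hφM (norm_nonneg _)
      have h3 : |φ y| = ‖y‖ := by rw [hφy, abs_of_nonneg (norm_nonneg y)]
      linarith
    by_cases hsign : ‖y‖ - M*‖x - y‖ ≤ 0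
    · refine le_trans ?_ hS0
      apply div_nonpos_of_nonpos_of_nonneg hsign (le_of_lt hM0)
    · push_neg at hsign
      refine le_trans ?_ (le_csSup hSbd hmemS)
      calc (‖y‖ - M*‖x - y‖)/M ≤ (‖y‖ - M*‖x - y‖)/‖φ‖ := by
            apply div_le_div_of_nonneg_left (le_of_lt hsign) hφpos hφM
        _ ≤ |φ x| / ‖φ‖ := by gcongr
  by_cases hx : x = 0
  · subst hx
    simp only [norm_zero, mul_zero]
    exact hS0
  · have hxpos : 0 < ‖x‖ := norm_pos_iff.mpr hx
    refine le_of_forall_pos_le_add ?_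
    intro ε' hε'
    set ε : ℝ := min (‖x‖/2) (ε'*M/(M+1)) with hεd
    have hεpos : 0 < ε := lt_min (by positivity) (by positivity)
    have hεhalf : ε ≤ ‖x‖/2 := min_le_left _ _
    have hεb : ε ≤ ε'*M/(M+1) := min_le_right _ _
    have hx' : x ∈ closure (⋃ i ∈ Set.Iio lam, Set.range (T i)) := by
      have : x ∈ (Set.univ : Set X) := trivial
      rw [← hcov] at this
      exact this
    obtain ⟨y, hy, hdxy⟩ := Metric.mem_closure_iff.1 hx' ε hεpos
    simp only [Set.mem_iUnion] at hy
    obtain ⟨i, hi, hymem⟩ := hy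
    rw [dist_eq_norm] at hdxy
    have hTy : T i y = y := (hmem i hi y).1 hymem
    have h1 : ‖x‖ ≤ ‖y‖ + ‖x - y‖ := by
      have hid : x = y + (x - y) := by abel
      calc ‖x‖ = ‖y + (x - y)‖ := by rw [← hid]
        _ ≤ ‖y‖ + ‖x - y‖ := norm_add_le _ _
    have hyne : y ≠ 0 := by
      intro h
      rw [h, sub_zero] at hdxy
      rw [h] at h1
      simp only [norm_zero, zero_add] at h1
      linarith
    have hk := hkey y i hi hTy hyne
    rw [div_le_iff₀ hM0] at hk
    have hεM : ε*(M+1) ≤ ε'*M := by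
      have hne : (M+1) ≠ 0 := by positivity
      have := mul_le_mul_of_nonneg_right hεb (by linarith : (0:ℝ) ≤ M+1)
      rwa [div_mul_cancel₀ _ hne] at this
    have hprod : (M+1)*‖x-y‖ ≤ (M+1)*ε :=
      mul_le_mul_of_nonneg_left (le_of_lt hdxy) (by linarith)
    have he1 : (M+1)*‖x-y‖ = M*‖x-y‖ + ‖x-y‖ := by ring
    have he2 : (M+1)*ε = ε*(M+1) := by ring
    have hgoal : ‖x‖ ≤ (sSup S + ε')*M := by
      have he3 : (sSup S + ε')*M = sSup S * M + ε'*M := by ring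
      rw [he3]
      linarith
    rw [one_div]
    rw [inv_mul_eq_div, div_le_iff₀ hM0]
    exact hgoal


end Core
end Stmt12

/-- if `X` has a projectional sequence `{P α : α < κ}` such that each
subspace `P α X` is weakly Lindelöf determined, then `X` is a Plichko space:
there are a norming set `D ⊆ X*` and a linearly dense `A ⊆ X` such that
`suppt(y, A)` is countable for every `y ∈ D`. -/
theorem statement12 {X : Type*} [NormedAddCommGroup X] [NormedSpace ℝ X] [CompleteSpace X]
    (κ : Ordinal) (P : Ordinal → X →L[ℝ] X)
    (hproj : ∀ ξ, ξ < κ → (P ξ).comp (P ξ) = P ξ)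
    (hseq : ∀ ξ η, ξ < η → η < κ →
      (P ξ).comp (P η) = P ξ ∧ (P η).comp (P ξ) = P ξ)
    (hlimit : ∀ δ, δ < κ → Order.IsSuccLimit δ →
      Set.range (P δ) = closure (⋃ ξ < δ, Set.range (P ξ)))
    (hcover : closure (⋃ ξ < κ, Set.range (P ξ)) = (Set.univ : Set X))
    (hWLD : ∀ α, α < κ → ∃ A ⊆ Set.range (P α),
      Set.range (P α) ⊆ closure (Submodule.span ℝ A : Set X) ∧
      ∀ φ : X →L[ℝ] ℝ, {a ∈ A | φ a ≠ 0}.Countable) :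
    ∃ D : Set (X →L[ℝ] ℝ),
      (∃ c > (0:ℝ), ∀ x : X,
        c * ‖x‖ ≤ sSup {t : ℝ | ∃ φ ∈ D, φ ≠ 0 ∧ t = |φ x| / ‖φ‖}) ∧
      ∃ A : Set X, closure (Submodule.span ℝ A : Set X) = Set.univ ∧
        ∀ φ ∈ D, {a ∈ A | φ a ≠ 0}.Countable := by
  classical
  -- total choice of WLD witness sets
  set 𝒜 : Ordinal → Set X := fun α => if h : α < κ then (hWLD α h).choose else ∅ with h𝒜def
  have h𝒜dense : ∀ α, α < κ → Set.range (P α) ⊆ closure (Submodule.span ℝ (𝒜 α) : Set X) := by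
    intro α h
    rw [h𝒜def]
    simp only [dif_pos h]
    exact (hWLD α h).choose_spec.2.1
  have h𝒜cnt : ∀ α, α < κ → ∀ φ : X →L[ℝ] ℝ, {a ∈ 𝒜 α | φ a ≠ 0}.Countable := by
    intro α h φ
    rw [h𝒜def]
    simp only [dif_pos h]
    exact (hWLD α h).choose_spec.2.2 φ
  -- basic facts about ranges
  have hPmem : ∀ ξ, ξ < κ → ∀ x : X, (x ∈ Set.range (P ξ) ↔ P ξ x = x) := by
    intro ξ hξ x
    constructor
    · rintro ⟨y, rfl⟩
      exact DFunLike.congr_fun (hproj ξ hξ) y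
    · intro h; exact ⟨x, h⟩
  have hPmono : ∀ ξ η, ξ ≤ η → η < κ → Set.range (P ξ) ⊆ Set.range (P η) := by
    intro ξ η hle hη x hx
    rcases eq_or_lt_of_le hle with rfl | hlt
    · exact hx
    · rw [hPmem η hη]
      rw [hPmem ξ (lt_trans hlt hη)] at hx
      rw [← hx]
      exact DFunLike.congr_fun (hseq ξ η hlt hη).2 x
  by_cases hW : ∃ C : Set Ordinal, C.Countable ∧ (∀ ξ ∈ C, ξ < κ) ∧
      closure (⋃ ξ ∈ C, Set.range (P ξ)) = (Set.univ : Set X)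
  · -- countably-determined case : X is WLD
    obtain ⟨C, hCc, hCκ, hCd⟩ := hW
    set A : Set X := ⋃ ξ ∈ C, 𝒜 ξ with hAdef
    have hdense : closure (Submodule.span ℝ A : Set X) = Set.univ := by
      apply Set.eq_univ_of_univ_subset
      rw [← hCd]
      refine closure_minimal ?_ isClosed_closure
      refine Set.iUnion₂_subset ?_
      intro ξ hξ
      refine subset_trans (h𝒜dense ξ (hCκ ξ hξ)) (closure_mono ?_)
      apply SetLike.coe_subset_coe.2
      apply Submodule.span_mono
      exact Set.subset_biUnion_of_mem hξ
    have hcnt : ∀ φ : X →L[ℝ] ℝ, {a ∈ A | φ a ≠ 0}.Countable := by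
      intro φ
      have hsub : {a ∈ A | φ a ≠ 0} ⊆ ⋃ ξ ∈ C, {a ∈ 𝒜 ξ | φ a ≠ 0} := by
        rintro a ⟨haA, hane⟩
        rw [hAdef] at haA
        simp only [Set.mem_iUnion] at haA
        obtain ⟨ξ, hξ, ha⟩ := haA
        exact Set.mem_biUnion hξ ⟨ha, hane⟩
      refine Set.Countable.mono hsub ?_
      exact Set.Countable.biUnion hCc (fun ξ hξ => h𝒜cnt ξ (hCκ ξ hξ) φ)
    exact Stmt12.wld_case A hdense hcnt
  · -- the long case
    -- κ is a limit ordinal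
    have hκ0 : κ ≠ 0 := by
      intro h
      subst h
      rw [show (⋃ ξ < (0:Ordinal), Set.range (P ξ)) = (∅ : Set X) by
        simp] at hcover
      rw [closure_empty] at hcover
      exact (Set.empty_ne_univ) hcover
    have hκnotsucc : ∀ γ, κ ≠ Order.succ γ := by
      intro γ h
      apply hW
      have hγκ : γ < κ := by rw [h]; exact Order.lt_succ γ
      refine ⟨{γ}, Set.countable_singleton γ, ?_, ?_⟩
      · intro ξ hξ
        rw [Set.mem_singleton_iff] at hξ
        rw [hξ]
        exact hγκ
      · have hsub : (⋃ ξ < κ, Set.range (P ξ)) = ⋃ ξ ∈ ({γ} : Set Ordinal), Set.range (P ξ) := by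
          apply Set.Subset.antisymm
          · refine Set.iUnion₂_subset ?_
            intro ξ hξ
            have hξγ : ξ ≤ γ := by
              rw [h] at hξ
              exact Order.lt_succ_iff.1 hξ
            intro x hx
            exact Set.mem_iUnion₂.2 ⟨γ, rfl, hPmono ξ γ hξγ hγκ hx⟩
          · refine Set.iUnion₂_subset ?_
            intro ξ hξ
            rw [Set.mem_singleton_iff] at hξ
            rw [hξ]
            intro x hx
            exact Set.mem_iUnion₂.2 ⟨γ, hγκ, hx⟩
        rw [← hsub]
        exact hcover
    have hκlim : Order.IsSuccLimit κ := by
      rcases Ordinal.zero_or_succ_or_isSuccLimit κ with h | ⟨γ, h⟩ | h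
      · exact absurd h hκ0
      · exact absurd h.symm (hκnotsucc γ)
      · exact h
    -- a cofinal set of uniformly bounded projections
    have hcof : ∃ M : ℕ, ∀ ξ, ξ < κ → ∃ α, (α < κ ∧ ‖P α‖ ≤ (M:ℝ)) ∧ ξ ≤ α := by
      by_contra hnc
      push_neg at hnc
      choose ξf hξflt hξfbig using hnc
      set s : Ordinal := sSup (Set.range ξf) with hs
      have hsbd : BddAbove (Set.range ξf) := Stmt12.bddc (Set.countable_range ξf)
      by_cases hsκ : s < κ
      · obtain ⟨M, hM⟩ := exists_nat_ge ‖P s‖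
        have h1 : s < ξf M := hξfbig M s ⟨hsκ, hM⟩
        have h2 : ξf M ≤ s := le_csSup hsbd ⟨M, rfl⟩
        exact absurd h1 (not_lt.2 h2)
      · push_neg at hsκ
        apply hW
        refine ⟨Set.range ξf, Set.countable_range ξf, ?_, ?_⟩
        · rintro ξ ⟨M, rfl⟩
          exact hξflt M
        · have hsub : (⋃ ξ < κ, Set.range (P ξ)) = ⋃ ξ ∈ Set.range ξf, Set.range (P ξ) := by
            apply Set.Subset.antisymm
            · refine Set.iUnion₂_subset ?_
              intro ξ hξ
              have hlt : ξ < sSup (Set.range ξf) := lt_of_lt_of_le hξ hsκ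
              obtain ⟨e, ⟨M, rfl⟩, he⟩ := exists_lt_of_lt_csSup (Set.range_nonempty ξf) hlt
              intro x hx
              exact Set.mem_iUnion₂.2 ⟨ξf M, ⟨M, rfl⟩, hPmono ξ (ξf M) (le_of_lt he) (hξflt M) hx⟩
            · refine Set.iUnion₂_subset ?_
              rintro ξ ⟨M, rfl⟩
              intro x hx
              exact Set.mem_iUnion₂.2 ⟨ξf M, hξflt M, hx⟩
          rw [← hsub]
          exact hcover
    obtain ⟨M₀, hM₀⟩ := hcof
    set Mr : ℝ := (M₀ : ℝ) + 1 with hMrdef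
    have hM₀0 : (0:ℝ) ≤ (M₀:ℝ) := Nat.cast_nonneg M₀
    have hMr1 : (1:ℝ) ≤ Mr := by rw [hMrdef]; linarith
    have hMr0 : (0:ℝ) < Mr := lt_of_lt_of_le one_pos hMr1
    set Λ : Set Ordinal := {α | α < κ ∧ ‖P α‖ ≤ Mr} with hΛdef
    have hΛcof : ∀ ξ, ξ < κ → ∃ α ∈ Λ, ξ ≤ α := by
      intro ξ hξ
      obtain ⟨α, ⟨h1, h2⟩, h3⟩ := hM₀ ξ hξ
      exact ⟨α, ⟨h1, le_trans h2 (by rw [hMrdef]; linarith)⟩, h3⟩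
    have hΛclosed : ∀ t, t < κ → Order.IsSuccLimit t →
        (∀ β, β < t → ∃ α, α ∈ Λ ∧ β < α ∧ α < t) → t ∈ Λ := by
      intro t ht htlim hcofb
      refine ⟨ht, ?_⟩
      apply ContinuousLinearMap.opNorm_le_bound _ (le_of_lt hMr0)
      intro x
      have hb : ∀ ε : ℝ, 0 < ε → ‖P t x‖ ≤ Mr * ‖x‖ + (1+Mr)*ε := by
        intro ε hε
        have h1 : P t x ∈ closure (⋃ ξ < t, Set.range (P ξ)) := by
          rw [← hlimit t ht htlim]
          exact ⟨x, rfl⟩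
        obtain ⟨z, hz, hdz⟩ := Metric.mem_closure_iff.1 h1 ε hε
        simp only [Set.mem_iUnion] at hz
        obtain ⟨ξ₀, hξ₀t, hzmem⟩ := hz
        rw [dist_eq_norm] at hdz
        obtain ⟨α, hαΛ, hξ₀α, hαt⟩ := hcofb ξ₀ hξ₀t
        have hαlt : α < κ := hαΛ.1
        have hPαz : P α z = z := by
          rw [← hPmem α hαlt]
          exact hPmono ξ₀ α (le_of_lt hξ₀α) hαlt hzmem
        have hPαPt : P α (P t x) = P α x := DFunLike.congr_fun (hseq α t hαt ht).1 x
        have e1 : ‖P t x‖ ≤ ‖P t x - z‖ + ‖z‖ := by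
          have hid : P t x = (P t x - z) + z := by abel
          calc ‖P t x‖ = ‖(P t x - z) + z‖ := by rw [← hid]
            _ ≤ ‖P t x - z‖ + ‖z‖ := norm_add_le _ _
        have e2 : ‖z‖ ≤ Mr * ε + Mr * ‖x‖ := by
          have hid2 : z = (z - P t x) + P t x := by abel
          have : P α z = P α (z - P t x) + P α (P t x) := by
            conv_lhs => rw [hid2]
            rw [map_add]
          rw [← hPαz, this]
          calc ‖P α (z - P t x) + P α (P t x)‖
              ≤ ‖P α (z - P t x)‖ + ‖P α (P t x)‖ := norm_add_le _ _
            _ ≤ Mr * ε + Mr * ‖x‖ := by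
                apply add_le_add
                · calc ‖P α (z - P t x)‖ ≤ ‖P α‖ * ‖z - P t x‖ := (P α).le_opNorm _
                    _ ≤ Mr * ε := by
                        apply _root_.mul_le_mul hαΛ.2 _ (norm_nonneg _) (le_of_lt hMr0)
                        rw [norm_sub_rev]
                        exact le_of_lt hdz
                · rw [hPαPt]
                  calc ‖P α x‖ ≤ ‖P α‖ * ‖x‖ := (P α).le_opNorm _
                    _ ≤ Mr * ‖x‖ := mul_le_mul_of_nonneg_right hαΛ.2 (norm_nonneg _)
        calc ‖P t x‖ ≤ ‖P t x - z‖ + ‖z‖ := e1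
          _ ≤ ε + (Mr * ε + Mr * ‖x‖) := add_le_add (le_of_lt hdz) e2
          _ = Mr * ‖x‖ + (1+Mr)*ε := by ring
      refine le_of_forall_pos_le_add ?_
      intro ε' hε'
      have h1Mr : (0:ℝ) < 1 + Mr := by linarith
      have := hb (ε'/(1+Mr)) (by positivity)
      calc ‖P t x‖ ≤ Mr * ‖x‖ + (1+Mr)*(ε'/(1+Mr)) := this
        _ = Mr * ‖x‖ + ε' := by
            rw [mul_div_cancel₀ _ (ne_of_gt h1Mr)]
    -- enumeration of Λ
    set g : Ordinal → Ordinal := Stmt12.clubEnum Λ with hgdef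
    set good : Ordinal → Prop := fun i => ∃ α, α ∈ Λ ∧ ∀ i', i' < i → g i' < α with hgood
    have hgood_spec : ∀ i, good i → g i ∈ Λ ∧ ∀ i', i' < i → g i' < g i := by
      intro i hi
      have hne : {α | α ∈ Λ ∧ ∀ i', i' < i → g i' < α}.Nonempty := hi
      have hmem : g i ∈ {α | α ∈ Λ ∧ ∀ i', i' < i → g i' < α} := by
        rw [hgdef, Stmt12.clubEnum_eq]
        exact csInf_mem hne
      exact ⟨hmem.1, hmem.2⟩
    set BAD : Set Ordinal := {i | ¬ good i} with hBAD
    have hbadne : BAD.Nonempty := by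
      by_contra hb
      rw [Set.not_nonempty_iff_eq_empty] at hb
      have hallgood : ∀ i, good i := by
        intro i
        by_contra hbad
        rw [Set.eq_empty_iff_forall_notMem] at hb
        exact hb i hbad
      have hgele : ∀ i : Ordinal, i ≤ g i := by
        intro i
        induction i using Ordinal.induction with
        | _ i IH =>
        apply le_of_forall_lt
        intro c hc
        exact lt_of_le_of_lt (IH c hc) ((hgood_spec i (hallgood i)).2 c hc)
      have h1 : g κ ∈ Λ := (hgood_spec κ (hallgood κ)).1
      have h2 : g κ < κ := h1.1
      exact absurd (hgele κ) (not_le.2 h2)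
    set lam : Ordinal := sInf BAD with hlamdef
    have hlamBAD : lam ∈ BAD := csInf_mem hbadne
    have hgoodall : ∀ i, i < lam → good i := by
      intro i hi
      by_contra hbad
      have hmem : i ∈ BAD := hbad
      have hle : sInf BAD ≤ i := csInf_le (OrderBot.bddBelow BAD) hmem
      rw [← hlamdef] at hle
      exact absurd hle (not_le.2 hi)
    have hgΛ : ∀ i, i < lam → g i ∈ Λ := fun i hi => (hgood_spec i (hgoodall i hi)).1
    have hgκ : ∀ i, i < lam → g i < κ := fun i hi => (hgΛ i hi).1
    have hgnorm : ∀ i, i < lam → ‖P (g i)‖ ≤ Mr := fun i hi => (hgΛ i hi).2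
    have hgmono : ∀ i' i, i' < i → i < lam → g i' < g i :=
      fun i' i h hi => (hgood_spec i (hgoodall i hi)).2 i' h
    have hlam0 : lam ≠ 0 := by
      intro h
      apply hlamBAD
      rw [h]
      obtain ⟨α, hα, -⟩ := hΛcof 0 (pos_iff_ne_zero.2 hκ0)
      exact ⟨α, hα, fun i' hi' => absurd hi' (not_lt_of_ge zero_le)⟩
    have hlamnotsucc : ∀ m, lam ≠ Order.succ m := by
      intro m h
      have hm : m < lam := by rw [h]; exact Order.lt_succ m
      have hgm : g m ∈ Λ := hgΛ m hm
      have hsucclt : Order.succ (g m) < κ := hκlim.succ_lt hgm.1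
      obtain ⟨α, hα, hle⟩ := hΛcof (Order.succ (g m)) hsucclt
      apply hlamBAD
      refine ⟨α, hα, ?_⟩
      intro i' hi'
      rw [h, Order.lt_succ_iff] at hi'
      rcases eq_or_lt_of_le hi' with rfl | hlt
      · exact lt_of_lt_of_le (Order.lt_succ _) hle
      · exact lt_trans (hgmono i' m hlt hm) (lt_of_lt_of_le (Order.lt_succ _) hle)
    have hlamlim : Order.IsSuccLimit lam := by
      rcases Ordinal.zero_or_succ_or_isSuccLimit lam with h | ⟨m, h⟩ | h
      · exact absurd h hlam0
      · exact absurd h.symm (hlamnotsucc m)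
      · exact h
    -- continuity of g at limits below lam
    have hgcont : ∀ j, j < lam → Order.IsSuccLimit j →
        Order.IsSuccLimit (g j) ∧ g j = sSup (g '' Set.Iio j) := by
      intro j hj hjlim
      set E' : Set Ordinal := g '' Set.Iio j with hE'
      have hE'ne : E'.Nonempty := ⟨g 0, 0, hjlim.pos, rfl⟩
      have hE'bd : BddAbove E' := by
        refine ⟨g j, ?_⟩
        rintro e ⟨i, hi, rfl⟩
        exact le_of_lt (hgmono i j hi hj)
      set t : Ordinal := sSup E' with ht
      have htle : t ≤ g j := by
        refine csSup_le hE'ne ?_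
        rintro e ⟨i, hi, rfl⟩
        exact le_of_lt (hgmono i j hi hj)
      have hmemE' : ∀ i, i < j → g i ≤ t := fun i hi => le_csSup hE'bd ⟨i, hi, rfl⟩
      have hstrict : ∀ i, i < j → g i < t := by
        intro i hi
        have hi1 : i + 1 < j := by
          rw [Ordinal.add_one_eq_succ]
          exact hjlim.succ_lt hi
        refine lt_of_lt_of_le (hgmono i (i+1) ?_ (lt_trans hi1 hj)) (hmemE' (i+1) hi1)
        rw [Ordinal.add_one_eq_succ]
        exact Order.lt_succ i
      have htlim : Order.IsSuccLimit t := by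
        refine Stmt12.mkLim ?_ ?_
        · have h1 : g 0 < t := hstrict 0 hjlim.pos
          have h0 : (0:Ordinal) ≤ g 0 := zero_le
          exact ne_of_gt (lt_of_le_of_lt h0 h1)
        · intro a ha
          obtain ⟨e, ⟨i, hi, rfl⟩, hae⟩ := exists_lt_of_lt_csSup hE'ne ha
          change a < g i at hae
          have hi1 : i + 1 < j := by
            rw [Ordinal.add_one_eq_succ]
            exact hjlim.succ_lt hi
          calc Order.succ a ≤ g i := Order.succ_le_iff.2 hae
            _ < g (i+1) := hgmono i (i+1) (by
                rw [Ordinal.add_one_eq_succ]; exact Order.lt_succ i) (lt_trans hi1 hj)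
            _ ≤ t := hmemE' (i+1) hi1
      have htκ : t < κ := lt_of_le_of_lt htle (hgκ j hj)
      have htΛ : t ∈ Λ := by
        apply hΛclosed t htκ htlim
        intro β hβ
        obtain ⟨e, ⟨i, hi, rfl⟩, hβe⟩ := exists_lt_of_lt_csSup hE'ne hβ
        change β < g i at hβe
        exact ⟨g i, hgΛ i (lt_trans hi hj), hβe, hstrict i hi⟩
      have hgjle : g j ≤ t := by
        rw [hgdef, Stmt12.clubEnum_eq]
        apply csInf_le (OrderBot.bddBelow _)
        refine ⟨htΛ, ?_⟩
        intro i' hi'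
        exact hstrict i' hi'
      have hgjt : g j = t := le_antisymm hgjle htle
      rw [hgjt]
      exact ⟨htlim, rfl⟩
    -- cofinality of the range of g
    have hgcof : ∀ ξ, ξ < κ → ∃ i, i < lam ∧ ξ ≤ g i := by
      intro ξ hξ
      by_contra hnone
      push_neg at hnone
      obtain ⟨α, hα, hξα⟩ := hΛcof ξ hξ
      apply hlamBAD
      refine ⟨α, hα, ?_⟩
      intro i' hi'
      exact lt_of_lt_of_le (hnone i' hi') hξα
    -- apply the core theorem
    apply Stmt12.core lam (fun i => P (g i)) Mr hlamlim hMr1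
    · exact fun i hi => hgnorm i hi
    · exact fun i hi x => DFunLike.congr_fun (hproj (g i) (hgκ i hi)) x
    · intro i j hij hj
      constructor
      · exact fun x => DFunLike.congr_fun (hseq (g i) (g j) (hgmono i j hij hj) (hgκ j hj)).1 x
      · exact fun x => DFunLike.congr_fun (hseq (g i) (g j) (hgmono i j hij hj) (hgκ j hj)).2 x
    · intro j hj hjlim
      obtain ⟨hgjlim, hgjsup⟩ := hgcont j hj hjlim
      have h1 := hlimit (g j) (hgκ j hj) hgjlim
      rw [h1]
      have hseteq : (⋃ ξ < g j, Set.range (P ξ)) = ⋃ i < j, Set.range (P (g i)) := by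
        apply Set.Subset.antisymm
        · refine Set.iUnion₂_subset ?_
          intro ξ hξ
          have : ξ < sSup (g '' Set.Iio j) := by rw [← hgjsup]; exact hξ
          obtain ⟨e, ⟨i, hi, rfl⟩, he⟩ := exists_lt_of_lt_csSup (⟨g 0, 0, hjlim.pos, rfl⟩ : (g '' Set.Iio j).Nonempty) this
          change ξ < g i at he
          intro x hx
          exact Set.mem_iUnion₂.2 ⟨i, hi, hPmono ξ (g i) (le_of_lt he) (hgκ i (lt_trans hi hj)) hx⟩
        · refine Set.iUnion₂_subset ?_
          intro i hi
          intro x hx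
          exact Set.mem_iUnion₂.2 ⟨g i, hgmono i j hi hj, hx⟩
      rw [hseteq]
    · apply Set.eq_univ_of_univ_subset
      rw [← hcover]
      apply closure_mono
      refine Set.iUnion₂_subset ?_
      intro ξ hξ
      obtain ⟨i, hi, hle⟩ := hgcof ξ hξ
      intro x hx
      exact Set.mem_iUnion₂.2 ⟨i, hi, hPmono ξ (g i) hle (hgκ i hi) hx⟩
    · exact fun i hi => h𝒜dense (g i) (hgκ i hi)
    · exact fun i hi => h𝒜cnt (g i) (hgκ i hi)
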